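/- Let R be a discrete valuation ring with fraction field K and residue field κ, and let G be a finite group whose order is invertible in R. Let M be a finitely generated free R-module equipped with an action of G by R-module automorphisms, and extend the action to K ⊗_R M and to κ ⊗_R M through the M-factor. Then dim_K (K ⊗_R M)^G = dim_κ (κ ⊗_R M)^G, where (·)^G denotes the subspace of vectors fixed by every element of G. -/

import Mathlib

open LinearMap Module TensorProduct

section RankLemma

variable {R M : Type*} [CommRing R] [AddCommGroup M] [Module R M]

private lemma cor_comp_subtype (e : M →ₗ[R] M) (he : e ∘ₗ e = e) :
    (e.codRestrict (LinearMap.range e) (fun x => LinearMap.mem_range_self e x)) ∘ₗ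
      (LinearMap.range e).subtype = LinearMap.id := by
  ext ⟨x, y, rfl⟩
  have : e (e y) = e y := congrFun (congrArg DFunLike.coe he) y
  simpa [LinearMap.codRestrict] using this

private lemma finrank_range_baseChange [StrongRankCondition R] [Module.Finite R M]
    [Module.Free R M] [IsLocalRing R] (e : M →ₗ[R] M) (he : e ∘ₗ e = e)
    (A : Type*) [Field A] [Algebra R A] :
    Module.finrank A (LinearMap.range (e.baseChange A))
      = Module.finrank R (LinearMap.range e) := by
  set P := LinearMap.range e with hP
  set ι : P →ₗ[R] M := P.subtype with hι
  set c : M →ₗ[R] P := e.codRestrict P (fun x => LinearMap.mem_range_self e x) with hc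
  have hci : c ∘ₗ ι = LinearMap.id := cor_comp_subtype e he
  have hic : ι ∘ₗ c = e := LinearMap.subtype_comp_codRestrict e P _
  haveI : Module.Finite R P := Module.Finite.range e
  haveI : Module.Projective R P := Module.Projective.of_split ι c hci
  haveI : Module.FinitePresentation R P := Module.finitePresentation_of_projective R P
  haveI : Module.Free R P := Module.free_of_flat_of_isLocalRing
  have hciA : (c.baseChange A) ∘ₗ (ι.baseChange A) = LinearMap.id := by
    rw [← LinearMap.baseChange_comp, hci, LinearMap.baseChange_id]
  have hinj : Function.Injective (ι.baseChange A) := by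
    intro x y hxy
    have := congrArg (c.baseChange A) hxy
    simpa [← LinearMap.comp_apply, hciA] using this
  have hsurj : LinearMap.range (c.baseChange A) = ⊤ := by
    rw [LinearMap.range_eq_top]
    intro y
    exact ⟨ι.baseChange A y, by
      have := congrFun (congrArg DFunLike.coe hciA) y
      simpa using this⟩
  have hrange : LinearMap.range (e.baseChange A) = LinearMap.range (ι.baseChange A) := by
    rw [← hic, LinearMap.baseChange_comp, LinearMap.range_comp_of_range_eq_top _ hsurj]
  let b := Module.Free.chooseBasis R P
  have h1 : Module.finrank R P = Fintype.card (Module.Free.ChooseBasisIndex R P) :=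
    Module.finrank_eq_card_chooseBasisIndex R P
  let bA : Basis (Module.Free.ChooseBasisIndex R P) A (A ⊗[R] P) := b.baseChange A
  let eqv : (A ⊗[R] P) ≃ₗ[A] ↥(LinearMap.range (e.baseChange A)) :=
    (LinearEquiv.ofInjective (ι.baseChange A) hinj).trans
      (LinearEquiv.ofEq _ _ hrange.symm)
  rw [Module.finrank_eq_card_basis (bA.map eqv), h1]

end RankLemma

section InvariantsLemma

variable {R M G : Type*} [CommRing R] [AddCommGroup M] [Module R M]
  [Group G] [Fintype G]

private lemma rho_fix (ρ : G →* (M ≃ₗ[R] M)) (h : G) (x : M) :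
    ∑ g : G, (ρ h) ((ρ g) x) = ∑ g : G, (ρ g) x :=
  Fintype.sum_bijective (fun g => h * g) (Group.mulLeft_bijective h) _ _
    (fun g => by rw [map_mul]; rfl)

private lemma rho_comp_avg (hG : IsUnit ((Fintype.card G : R))) (ρ : G →* (M ≃ₗ[R] M))
    (h : G) :
    (ρ h).toLinearMap ∘ₗ ((↑hG.unit⁻¹ : R) • ∑ g : G, (ρ g).toLinearMap)
      = (↑hG.unit⁻¹ : R) • ∑ g : G, (ρ g).toLinearMap := by
  ext x
  simp only [LinearMap.comp_apply, LinearMap.smul_apply, LinearMap.sum_apply, map_smul,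
    map_sum, LinearEquiv.coe_coe]
  rw [rho_fix]

private lemma avg_idem (hG : IsUnit ((Fintype.card G : R))) (ρ : G →* (M ≃ₗ[R] M)) :
    ((↑hG.unit⁻¹ : R) • ∑ g : G, (ρ g).toLinearMap) ∘ₗ
      ((↑hG.unit⁻¹ : R) • ∑ g : G, (ρ g).toLinearMap)
      = (↑hG.unit⁻¹ : R) • ∑ g : G, (ρ g).toLinearMap := by
  ext x
  have key : ∀ h : G, (ρ h) (((↑hG.unit⁻¹ : R) • ∑ g : G, (ρ g).toLinearMap) x)
      = ((↑hG.unit⁻¹ : R) • ∑ g : G, (ρ g).toLinearMap) x := fun h =>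
    congrFun (congrArg DFunLike.coe (rho_comp_avg hG ρ h)) x
  calc (((↑hG.unit⁻¹ : R) • ∑ g : G, (ρ g).toLinearMap) ∘ₗ
          ((↑hG.unit⁻¹ : R) • ∑ g : G, (ρ g).toLinearMap)) x
      = (↑hG.unit⁻¹ : R) • ∑ h : G,
          (ρ h) (((↑hG.unit⁻¹ : R) • ∑ g : G, (ρ g).toLinearMap) x) := by
        simp only [LinearMap.comp_apply, LinearMap.smul_apply, LinearMap.sum_apply,
          LinearEquiv.coe_coe]
    _ = (↑hG.unit⁻¹ : R) • ∑ _h : G,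
          (((↑hG.unit⁻¹ : R) • ∑ g : G, (ρ g).toLinearMap) x) := by
        rw [Finset.sum_congr rfl fun h _ => key h]
    _ = ((↑hG.unit⁻¹ : R) • ∑ g : G, (ρ g).toLinearMap) x := by
        have hu : (↑hG.unit⁻¹ : R) * (Fintype.card G : R) = 1 := by
          simpa only [IsUnit.unit_spec] using hG.unit.inv_mul
        rw [Finset.sum_const, Finset.card_univ, ← Nat.cast_smul_eq_nsmul R, smul_smul,
          hu, one_smul]

private lemma invariants_eq_range (hG : IsUnit ((Fintype.card G : R)))
    (ρ : G →* (M ≃ₗ[R] M)) (A : Type*) [CommRing A] [Algebra R A] :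
    (⨅ g : G, LinearMap.eqLocus (LinearMap.baseChange A (ρ g).toLinearMap) LinearMap.id)
      = LinearMap.range (LinearMap.baseChange A
          ((↑hG.unit⁻¹ : R) • ∑ g : G, (ρ g).toLinearMap)) := by
  have hsum : (∑ g : G, (ρ g).toLinearMap).baseChange A
      = ∑ g : G, ((ρ g).toLinearMap.baseChange A) :=
    map_sum (LinearMap.baseChangeHom R A M M) _ _
  apply le_antisymm
  · intro x hx
    simp only [Submodule.mem_iInf, LinearMap.mem_eqLocus, LinearMap.id_coe, id_eq] at hx
    refine ⟨x, ?_⟩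
    rw [LinearMap.baseChange_smul, LinearMap.smul_apply, hsum, LinearMap.sum_apply,
      Finset.sum_congr rfl fun g _ => hx g, Finset.sum_const, Finset.card_univ,
      ← Nat.cast_smul_eq_nsmul A, ← algebraMap_smul A (↑hG.unit⁻¹ : R), smul_smul,
      ← map_natCast (algebraMap R A), ← map_mul]
    have hu : (↑hG.unit⁻¹ : R) * (Fintype.card G : R) = 1 := by
      simpa only [IsUnit.unit_spec] using hG.unit.inv_mul
    rw [hu, map_one, one_smul]
  · rintro x ⟨y, rfl⟩
    simp only [Submodule.mem_iInf, LinearMap.mem_eqLocus, LinearMap.id_coe, id_eq]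
    intro g
    rw [← LinearMap.comp_apply, ← LinearMap.baseChange_comp, rho_comp_avg hG ρ g]

end InvariantsLemma

/-- Over a discrete valuation ring, the dimension of the invariants of a finite group of order
invertible in `R` acting on a finite free module is the same in the generic and the special
fibre. -/
theorem statement3 {R : Type*} [CommRing R] [IsDomain R] [IsDiscreteValuationRing R]
    {K : Type*} [Field K] [Algebra R K] [IsFractionRing R K]
    {M : Type*} [AddCommGroup M] [Module R M] [Module.Free R M] [Module.Finite R M]
    {G : Type*} [Group G] [Fintype G] (hG : IsUnit ((Fintype.card G : R)))
    (ρ : G →* (M ≃ₗ[R] M)) :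
    Module.finrank K
        ↥(⨅ g : G, LinearMap.eqLocus
          (LinearMap.baseChange K (ρ g).toLinearMap) LinearMap.id)
      = Module.finrank (IsLocalRing.ResidueField R)
        ↥(⨅ g : G, LinearMap.eqLocus
          (LinearMap.baseChange (IsLocalRing.ResidueField R) (ρ g).toLinearMap)
          LinearMap.id) := by
  rw [invariants_eq_range hG ρ K, invariants_eq_range hG ρ (IsLocalRing.ResidueField R),
    finrank_range_baseChange _ (avg_idem hG ρ) K,
    finrank_range_baseChange _ (avg_idem hG ρ) (IsLocalRing.ResidueField R)]
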